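/- For every p > 1 and every x ∈ (0,1), the functions k ↦ (arcsin_p(x^k))^(1/k) and k ↦ (artanh_p(x^k))^(1/k) are decreasing in k on (0,∞); that is, for all 0 < k₁ < k₂ one has (arcsin_p(x^(k₂)))^(1/k₂) ≤ (arcsin_p(x^(k₁)))^(1/k₁) and (artanh_p(x^(k₂)))^(1/k₂) ≤ (artanh_p(x^(k₁)))^(1/k₁). -/

import Mathlib

open Real

/-- The generalized inverse sine: `arcsin_p x = ∫₀ˣ (1 - tᵖ)^(-1/p) dt`. -/
noncomputable def arcsinp (p x : ℝ) : ℝ := ∫ t in (0:ℝ)..x, (1 - t ^ p) ^ (-1 / p)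

/-- The generalized inverse hyperbolic tangent: `artanh_p x = ∫₀ˣ (1 - tᵖ)⁻¹ dt`. -/
noncomputable def artanhp (p x : ℝ) : ℝ := ∫ t in (0:ℝ)..x, (1 - t ^ p)⁻¹

section Aux

open MeasureTheory Set

/-- Key lemma: if `f ≥ 1` is continuous and increasing on `[0,1)`, then for the primitive
`F y = ∫₀^y f` one has `F (x ^ μ) ≤ (F x) ^ μ` for `x ∈ (0,1)` and `μ ≥ 1`. -/
lemma aux_key (f : ℝ → ℝ)
    (hc : ∀ t ∈ Set.Ico (0:ℝ) 1, ContinuousAt f t)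
    (hmono : MonotoneOn f (Set.Ico (0:ℝ) 1))
    (hone : ∀ t ∈ Set.Ico (0:ℝ) 1, 1 ≤ f t)
    {x : ℝ} (hx0 : 0 < x) (hx1 : x < 1) {μ : ℝ} (hμ : 1 ≤ μ) :
    (∫ t in (0:ℝ)..(x ^ μ), f t) ≤ (∫ t in (0:ℝ)..x, f t) ^ μ := by
  set F : ℝ → ℝ := fun y => ∫ t in (0:ℝ)..y, f t with hFdef
  have hμ0 : 0 < μ := lt_of_lt_of_le one_pos hμ
  have hcontOn : ∀ {y : ℝ}, y < 1 → ContinuousOn f (Set.Icc 0 y) := by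
    intro y hy1 t ht
    exact (hc t ⟨ht.1, lt_of_le_of_lt ht.2 hy1⟩).continuousWithinAt
  have hint : ∀ {y : ℝ}, 0 ≤ y → y < 1 → IntervalIntegrable f volume 0 y := by
    intro y hy0 hy1
    apply ContinuousOn.intervalIntegrable
    rw [Set.uIcc_of_le hy0]
    exact hcontOn hy1
  have hderivF : ∀ y ∈ Set.Ioo (0:ℝ) 1, HasDerivAt F (f y) y := by
    intro y hy
    exact intervalIntegral.integral_hasDerivAt_right (hint hy.1.le hy.2)
      (ContinuousAt.stronglyMeasurableAtFilter isOpen_Ioo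
        (fun t ht => hc t ⟨ht.1.le, ht.2⟩) y hy)
      (hc y ⟨hy.1.le, hy.2⟩)
  have hFge : ∀ y, 0 ≤ y → y < 1 → y ≤ F y := by
    intro y hy0 hy1
    have h1 : (∫ t in (0:ℝ)..y, (1:ℝ)) ≤ F y := by
      apply intervalIntegral.integral_mono_on hy0 intervalIntegrable_const (hint hy0 hy1)
      intro t ht
      exact hone t ⟨ht.1, lt_of_le_of_lt ht.2 hy1⟩
    simpa using h1
  have hxμ0 : 0 < x ^ μ := rpow_pos_of_pos hx0 μ
  have hmaps : ∀ y ∈ Set.Icc (0:ℝ) x, y ^ μ ∈ Set.Icc (0:ℝ) x := by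
    intro y hy
    refine ⟨rpow_nonneg hy.1 μ, ?_⟩
    have h1 : y ^ μ ≤ y ^ (1:ℝ) :=
      rpow_le_rpow_of_exponent_ge' hy.1 (le_of_lt (lt_of_le_of_lt hy.2 hx1)) zero_le_one hμ
    rw [rpow_one] at h1
    exact h1.trans hy.2
  -- continuity of the two pieces on Icc 0 x
  have hFcont : ContinuousOn F (Set.Icc 0 x) := by
    have h1 : IntegrableOn f (Set.uIcc 0 x) volume := by
      rw [Set.uIcc_of_le hx0.le]
      exact (hcontOn hx1).integrableOn_Icc
    have := intervalIntegral.continuousOn_primitive_interval h1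
    rwa [Set.uIcc_of_le hx0.le] at this
  have hG1cont : ContinuousOn (fun y => F y ^ μ) (Set.Icc 0 x) :=
    hFcont.rpow_const (fun y _ => Or.inr hμ0.le)
  have hG2cont : ContinuousOn (fun y => F (y ^ μ)) (Set.Icc 0 x) := by
    apply hFcont.comp _ hmaps
    intro y _
    exact (Real.continuousAt_rpow_const y μ (Or.inr hμ0.le)).continuousWithinAt
  set G : ℝ → ℝ := fun y => F y ^ μ - F (y ^ μ) with hGdef
  have hGcont : ContinuousOn G (Set.Icc 0 x) := hG1cont.sub hG2cont
  -- derivative of G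
  have hdG : ∀ y ∈ Set.Ioo (0:ℝ) x,
      HasDerivAt G (f y * μ * F y ^ (μ - 1) - f (y ^ μ) * (μ * y ^ (μ - 1))) y := by
    intro y hy
    have hyIoo : y ∈ Set.Ioo (0:ℝ) 1 := ⟨hy.1, hy.2.trans hx1⟩
    have hyμle : y ^ μ ≤ y := by
      have h1 : y ^ μ ≤ y ^ (1:ℝ) :=
        rpow_le_rpow_of_exponent_ge' hy.1.le hyIoo.2.le zero_le_one hμ
      rwa [rpow_one] at h1
    have hyμIoo : y ^ μ ∈ Set.Ioo (0:ℝ) 1 :=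
      ⟨rpow_pos_of_pos hy.1 μ, lt_of_le_of_lt hyμle hyIoo.2⟩
    have hd1 : HasDerivAt (fun y => F y ^ μ) (f y * μ * F y ^ (μ - 1)) y :=
      (hderivF y hyIoo).rpow_const (Or.inr hμ)
    have hdr : HasDerivAt (fun y : ℝ => y ^ μ) (μ * y ^ (μ - 1)) y :=
      Real.hasDerivAt_rpow_const (Or.inr hμ)
    have hd2 : HasDerivAt (fun y => F (y ^ μ)) (f (y ^ μ) * (μ * y ^ (μ - 1))) y :=
      by have := (hderivF (y ^ μ) hyμIoo).comp y hdr; exact this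
    exact hd1.sub hd2
  have hdGnonneg : ∀ y ∈ Set.Ioo (0:ℝ) x,
      0 ≤ f y * μ * F y ^ (μ - 1) - f (y ^ μ) * (μ * y ^ (μ - 1)) := by
    intro y hy
    have hyIoo : y ∈ Set.Ioo (0:ℝ) 1 := ⟨hy.1, hy.2.trans hx1⟩
    have hyμle : y ^ μ ≤ y := by
      have h1 : y ^ μ ≤ y ^ (1:ℝ) :=
        rpow_le_rpow_of_exponent_ge' hy.1.le hyIoo.2.le zero_le_one hμ
      rwa [rpow_one] at h1
    have hyμIco : y ^ μ ∈ Set.Ico (0:ℝ) 1 :=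
      ⟨(rpow_pos_of_pos hy.1 μ).le, lt_of_le_of_lt hyμle hyIoo.2⟩
    have hf1 : f (y ^ μ) ≤ f y := hmono hyμIco ⟨hyIoo.1.le, hyIoo.2⟩ hyμle
    have hFy : y ≤ F y := hFge y hy.1.le hyIoo.2
    have hrp : y ^ (μ - 1) ≤ F y ^ (μ - 1) :=
      rpow_le_rpow hy.1.le hFy (sub_nonneg.2 hμ)
    have h2 : μ * y ^ (μ - 1) ≤ μ * F y ^ (μ - 1) :=
      mul_le_mul_of_nonneg_left hrp hμ0.le
    have hfpos : 0 ≤ f (y ^ μ) := le_trans zero_le_one (hone _ hyμIco)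
    have hfy : 0 ≤ f y := le_trans zero_le_one (hone y ⟨hyIoo.1.le, hyIoo.2⟩)
    have hynn : (0:ℝ) ≤ μ * y ^ (μ - 1) := mul_nonneg hμ0.le (Real.rpow_nonneg hy.1.le _)
    have hmm : f (y ^ μ) * (μ * y ^ (μ - 1)) ≤ f y * (μ * F y ^ (μ - 1)) :=
      mul_le_mul hf1 h2 hynn hfy
    nlinarith [hmm]
  have hmonoG : MonotoneOn G (Set.Icc 0 x) := by
    apply monotoneOn_of_deriv_nonneg (convex_Icc 0 x) hGcont
    · rw [interior_Icc]
      intro y hy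
      exact (hdG y hy).differentiableAt.differentiableWithinAt
    · rw [interior_Icc]
      intro y hy
      rw [(hdG y hy).deriv]
      exact hdGnonneg y hy
  have hF0 : F 0 = 0 := intervalIntegral.integral_same
  have hG0 : G 0 = 0 := by
    simp [hGdef, Real.zero_rpow hμ0.ne', hF0]
  have hle : G 0 ≤ G x :=
    hmonoG (Set.left_mem_Icc.2 hx0.le) (Set.right_mem_Icc.2 hx0.le) hx0.le
  rw [hG0] at hle
  have : 0 ≤ F x ^ μ - F (x ^ μ) := hle
  linarith

lemma aux_chain (f : ℝ → ℝ)
    (hc : ∀ t ∈ Set.Ico (0:ℝ) 1, ContinuousAt f t)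
    (hmono : MonotoneOn f (Set.Ico (0:ℝ) 1))
    (hone : ∀ t ∈ Set.Ico (0:ℝ) 1, 1 ≤ f t)
    {x : ℝ} (hx : x ∈ Set.Ioo (0:ℝ) 1) {k₁ k₂ : ℝ} (hk₁ : 0 < k₁) (hk : k₁ < k₂) :
    (∫ t in (0:ℝ)..(x ^ k₂), f t) ^ (1/k₂) ≤ (∫ t in (0:ℝ)..(x ^ k₁), f t) ^ (1/k₁) := by
  obtain ⟨hx0, hx1⟩ := hx
  have hk₂ : 0 < k₂ := hk₁.trans hk
  have hy0 : 0 < x ^ k₁ := rpow_pos_of_pos hx0 _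
  have hy1 : x ^ k₁ < 1 := rpow_lt_one hx0.le hx1 hk₁
  have hμ : 1 ≤ k₂ / k₁ := (one_le_div hk₁).2 hk.le
  have hxk : x ^ k₂ = (x ^ k₁) ^ (k₂ / k₁) := by
    rw [← Real.rpow_mul hx0.le]
    congr 1
    field_simp
  have hkey := aux_key f hc hmono hone hy0 hy1 hμ
  rw [← hxk] at hkey
  have hnn : ∀ {k : ℝ}, 0 < k → 0 ≤ ∫ t in (0:ℝ)..(x ^ k), f t := by
    intro k hkpos
    have hxk1 : x ^ k < 1 := rpow_lt_one hx0.le hx1 hkpos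
    apply intervalIntegral.integral_nonneg (rpow_pos_of_pos hx0 k).le
    intro t ht
    exact le_trans zero_le_one (hone t ⟨ht.1, lt_of_le_of_lt ht.2 hxk1⟩)
  calc (∫ t in (0:ℝ)..(x ^ k₂), f t) ^ (1/k₂)
      ≤ ((∫ t in (0:ℝ)..(x ^ k₁), f t) ^ (k₂/k₁)) ^ (1/k₂) :=
        Real.rpow_le_rpow (hnn hk₂) hkey (by positivity)
    _ = (∫ t in (0:ℝ)..(x ^ k₁), f t) ^ (1/k₁) := by
        rw [← Real.rpow_mul (hnn hk₁)]
        congr 1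
        field_simp

end Aux

theorem arcsinp_artanhp_rpow_decreasing (p x : ℝ) (hp : 1 < p)
    (hx : x ∈ Set.Ioo (0:ℝ) 1) (k₁ k₂ : ℝ) (hk₁ : 0 < k₁) (hk : k₁ < k₂) :
    (arcsinp p (x ^ k₂)) ^ (1 / k₂) ≤ (arcsinp p (x ^ k₁)) ^ (1 / k₁) ∧
      (artanhp p (x ^ k₂)) ^ (1 / k₂) ≤ (artanhp p (x ^ k₁)) ^ (1 / k₁) := by
  have hp0 : 0 < p := lt_trans one_pos hp
  have hbase : ∀ t ∈ Set.Ico (0:ℝ) 1, 0 < 1 - t ^ p := by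
    intro t ht
    have := Real.rpow_lt_one ht.1 ht.2 hp0
    linarith
  have hbase1 : ∀ t ∈ Set.Ico (0:ℝ) 1, 1 - t ^ p ≤ 1 := by
    intro t ht
    have := Real.rpow_nonneg ht.1 p
    linarith
  have hbmono : ∀ a ∈ Set.Ico (0:ℝ) 1, ∀ b ∈ Set.Ico (0:ℝ) 1, a ≤ b →
      1 - b ^ p ≤ 1 - a ^ p := by
    intro a ha b _ hab
    have := Real.rpow_le_rpow ha.1 hab hp0.le
    linarith
  have hbc : ∀ t ∈ Set.Ico (0:ℝ) 1, ContinuousAt (fun t : ℝ => 1 - t ^ p) t := by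
    intro t _
    exact continuousAt_const.sub (Real.continuousAt_rpow_const t p (Or.inr hp0.le))
  have hexp : (-1 : ℝ) / p ≤ 0 := by
    apply div_nonpos_of_nonpos_of_nonneg <;> linarith
  constructor
  · simp only [arcsinp]
    apply aux_chain (fun t => (1 - t ^ p) ^ (-1/p)) _ _ _ hx hk₁ hk
    · intro t ht
      exact (hbc t ht).rpow_const (Or.inl (hbase t ht).ne')
    · intro a ha b hb hab
      exact Real.rpow_le_rpow_of_nonpos (hbase b hb) (hbmono a ha b hb hab) hexp
    · intro t ht
      exact Real.one_le_rpow_of_pos_of_le_one_of_nonpos (hbase t ht) (hbase1 t ht) hexp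
  · simp only [artanhp]
    apply aux_chain (fun t => (1 - t ^ p)⁻¹) _ _ _ hx hk₁ hk
    · intro t ht
      exact (hbc t ht).inv₀ (hbase t ht).ne'
    · intro a ha b hb hab
      exact inv_anti₀ (hbase b hb) (hbmono a ha b hb hab)
    · intro t ht
      exact (one_le_inv₀ (hbase t ht)).2 (hbase1 t ht)
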